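/- Let G be a bipartite graph with parts A, B and let H be a subgraph whose edge set is a clique in L(G)². If M is a matching of size m in the bipartite complement of G (the graph on (A,B) whose edges are the non-edges of G between A and B), then |E(H)| ≤ |A|·|B| − m − m(m−1)/2. -/

import Mathlib

/-- Two edges of `G` at distance at most 2 (adjacency or equality in `L(G)²`). -/
def EdgesClose {V : Type*} (G : SimpleGraph V) (e f : Sym2 V) : Prop :=
  ∃ u v, u ∈ e ∧ v ∈ f ∧ (u = v ∨ G.Adj u v)

/-- Let `G` be bipartite with parts `A`, `B` and `H` a subgraph whose edge set
is a clique in `L(G)²`.  If `M` is a matching of size `m` in the bipartite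
complement of `G`, then `|E(H)| ≤ |A|·|B| − m − m(m−1)/2` (stated additively to
avoid truncated subtraction). -/
theorem stmt10 {V : Type*} [Fintype V] (G : SimpleGraph V)
    (A B : Set V) (hdisj : Disjoint A B) (hcover : A ∪ B = Set.univ)
    (hbip : ∀ x y, G.Adj x y → (x ∈ A ∧ y ∈ B) ∨ (x ∈ B ∧ y ∈ A))
    (H : G.Subgraph)
    (hclique : ∀ e ∈ H.edgeSet, ∀ f ∈ H.edgeSet, EdgesClose G e f)
    (M : Finset (V × V))
    (hM : ∀ p ∈ M, p.1 ∈ A ∧ p.2 ∈ B ∧ ¬ G.Adj p.1 p.2)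
    (hmatch : ∀ p ∈ M, ∀ q ∈ M, p ≠ q → p.1 ≠ q.1 ∧ p.2 ≠ q.2) :
    H.edgeSet.ncard + M.card + M.card * (M.card - 1) / 2 ≤ A.ncard * B.ncard := by
  classical
  have hAB : ∀ x, x ∈ A → x ∈ B → False := fun x hx hy =>
    Set.disjoint_left.mp hdisj hx hy
  have hfst : ∀ p ∈ M, ∀ q ∈ M, p.1 = q.1 → p = q := by
    intro p hp q hq h
    by_contra hne
    exact (hmatch p hp q hq hne).1 h
  have hsnd : ∀ p ∈ M, ∀ q ∈ M, p.2 = q.2 → p = q := by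
    intro p hp q hq h
    by_contra hne
    exact (hmatch p hp q hq hne).2 h
  -- no adjacency within a part
  have hadjA : ∀ x y, x ∈ A → y ∈ A → ¬ G.Adj x y := by
    intro x y hx hy hxy
    rcases hbip x y hxy with ⟨_, h⟩ | ⟨h, _⟩
    · exact hAB y hy h
    · exact hAB x hx h
  have hadjB : ∀ x y, x ∈ B → y ∈ B → ¬ G.Adj x y := by
    intro x y hx hy hxy
    rcases hbip x y hxy with ⟨h, _⟩ | ⟨_, h⟩
    · exact hAB x h hx
    · exact hAB y h hy
  -- key lemma: the two cross pairs cannot both be edges of H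
  have key : ∀ p ∈ M, ∀ q ∈ M, p ≠ q → ¬ (H.Adj p.1 q.2 ∧ H.Adj q.1 p.2) := by
    rintro p hp q hq hne ⟨h1, h2⟩
    obtain ⟨hpA, hpB, hpn⟩ := hM p hp
    obtain ⟨hqA, hqB, hqn⟩ := hM q hq
    obtain ⟨h1', h2'⟩ := hmatch p hp q hq hne
    obtain ⟨u, v, hu, hv, huv⟩ :=
      hclique s(p.1, q.2) (SimpleGraph.Subgraph.mem_edgeSet.mpr h1)
        s(q.1, p.2) (SimpleGraph.Subgraph.mem_edgeSet.mpr h2)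
    simp only [Sym2.mem_iff] at hu hv
    rcases hu with hu | hu <;> rcases hv with hv | hv <;> subst hu <;> subst hv <;>
        rcases huv with h | h
    · exact h1' h
    · exact hadjA p.1 q.1 hpA hqA h
    · exact hAB p.1 hpA (h ▸ hpB)
    · exact hpn h
    · exact hAB q.1 hqA (h ▸ hqB)
    · exact hqn (G.adj_symm h)
    · exact h2' h.symm
    · exact hadjB q.2 p.2 hqB hpB h
  set T : Finset (V × V) := Finset.univ.filter (fun p => p.1 ∈ A ∧ p.2 ∈ B) with hT
  set EH : Finset (V × V) := Finset.univ.filter (fun p => p.1 ∈ A ∧ H.Adj p.1 p.2) with hEH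
  set f : (V × V) × (V × V) → V × V :=
    fun x => if H.Adj x.1.1 x.2.2 then (x.2.1, x.1.2) else (x.1.1, x.2.2) with hfdef
  set C : Finset (V × V) := M.offDiag.image f with hC
  have hf : ∀ x, f x = (x.1.1, x.2.2) ∨ f x = (x.2.1, x.1.2) := by
    intro x
    simp only [hfdef]
    split <;> simp
  -- second vertex of an H-edge starting in A lies in B
  have hsecond : ∀ x y, x ∈ A → H.Adj x y → y ∈ B := by
    intro x y hx hxy
    rcases hbip x y (H.adj_sub hxy) with ⟨_, h⟩ | ⟨h, _⟩
    · exact h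
    · exact absurd hx (fun hx => hAB x hx h)
  -- cardinality of EH equals ncard of the edge set
  have hEHcard : H.edgeSet.ncard = EH.card := by
    have himg : H.edgeSet = ↑(EH.image (fun p => s(p.1, p.2))) := by
      ext e
      induction e with
      | _ x y =>
        simp only [Finset.coe_image, Set.mem_image, Finset.mem_coe, hEH,
          Finset.mem_filter, Finset.mem_univ, true_and,
          SimpleGraph.Subgraph.mem_edgeSet]
        constructor
        · intro hxy
          rcases hbip x y (H.adj_sub hxy) with ⟨hx, _⟩ | ⟨_, hy⟩
          · exact ⟨(x, y), ⟨hx, hxy⟩, rfl⟩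
          · exact ⟨(y, x), ⟨hy, hxy.symm⟩, Sym2.eq_swap⟩
        · rintro ⟨p, ⟨hp1, hp2⟩, he⟩
          rw [Sym2.eq_iff] at he
          rcases he with ⟨h1, h2⟩ | ⟨h1, h2⟩
          · rwa [h1, h2] at hp2
          · rw [h1, h2] at hp2; exact hp2.symm
    rw [himg, Set.ncard_coe_finset]
    apply Finset.card_image_of_injOn
    intro p hp q hq he
    simp only [hEH, Finset.mem_coe, Finset.mem_filter] at hp hq
    rw [Sym2.eq_iff] at he
    rcases he with ⟨h1, h2⟩ | ⟨h1, h2⟩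
    · exact Prod.ext h1 h2
    · exact absurd hp.2.1 (fun hx => hAB p.1 hx (h1 ▸ hsecond q.1 q.2 hq.2.1 hq.2.2))
  -- subsets of T
  have hEHT : EH ⊆ T := by
    intro p hp
    simp only [hEH, Finset.mem_filter] at hp
    simp only [hT, Finset.mem_filter, Finset.mem_univ, true_and]
    exact ⟨hp.2.1, hsecond p.1 p.2 hp.2.1 hp.2.2⟩
  have hMT : M ⊆ T := by
    intro p hp
    obtain ⟨h1, h2, _⟩ := hM p hp
    simp only [hT, Finset.mem_filter, Finset.mem_univ, true_and]
    exact ⟨h1, h2⟩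
  have hCT : C ⊆ T := by
    intro c hc
    simp only [hC, Finset.mem_image, Finset.mem_offDiag] at hc
    obtain ⟨x, ⟨hx1, hx2, _⟩, hfx⟩ := hc
    obtain ⟨h1A, h1B, _⟩ := hM x.1 hx1
    obtain ⟨h2A, h2B, _⟩ := hM x.2 hx2
    simp only [hT, Finset.mem_filter, Finset.mem_univ, true_and]
    rcases hf x with h | h <;> rw [h] at hfx <;> subst hfx
    · exact ⟨h1A, h2B⟩
    · exact ⟨h2A, h1B⟩
  -- elements of C are not H-edges
  have hCnoedge : ∀ c ∈ C, ¬ H.Adj c.1 c.2 := by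
    intro c hc
    simp only [hC, Finset.mem_image, Finset.mem_offDiag] at hc
    obtain ⟨x, ⟨hx1, hx2, hxne⟩, hfx⟩ := hc
    simp only [hfdef] at hfx
    split at hfx
    · rename_i hedge
      subst hfx
      intro h2
      exact key x.1 hx1 x.2 hx2 hxne ⟨hedge, h2⟩
    · rename_i hedge
      subst hfx
      exact hedge
  -- disjointness
  have d1 : Disjoint EH M := by
    rw [Finset.disjoint_left]
    intro p hp hpM
    simp only [hEH, Finset.mem_filter] at hp
    exact (hM p hpM).2.2 (H.adj_sub hp.2.2)
  have d2 : Disjoint EH C := by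
    rw [Finset.disjoint_left]
    intro p hp hpC
    simp only [hEH, Finset.mem_filter] at hp
    exact hCnoedge p hpC hp.2.2
  have d3 : Disjoint M C := by
    rw [Finset.disjoint_left]
    intro r hrM hrC
    simp only [hC, Finset.mem_image, Finset.mem_offDiag] at hrC
    obtain ⟨x, ⟨hx1, hx2, hxne⟩, hfx⟩ := hrC
    rcases hf x with h | h <;> rw [h] at hfx
    · have e1 : r.1 = x.1.1 := by rw [← hfx]
      have e2 : r.2 = x.2.2 := by rw [← hfx]
      have : r = x.1 := hfst r hrM x.1 hx1 e1
      subst this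
      exact hxne (hsnd x.1 hx1 x.2 hx2 e2)
    · have e1 : r.1 = x.2.1 := by rw [← hfx]
      have e2 : r.2 = x.1.2 := by rw [← hfx]
      have : r = x.2 := hfst r hrM x.2 hx2 e1
      subst this
      exact hxne (hsnd x.1 hx1 x.2 hx2 e2.symm)
  -- C is at least half the size of offDiag
  have hfiber : M.offDiag.card ≤ 2 * C.card := by
    apply Finset.card_le_mul_card_image
    intro a _
    by_cases hne : (M.offDiag.filter (fun x => f x = a)).Nonempty
    · obtain ⟨x, hx⟩ := hne
      simp only [Finset.mem_filter, Finset.mem_offDiag] at hx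
      obtain ⟨⟨hx1, hx2, _⟩, hxa⟩ := hx
      have hsub : M.offDiag.filter (fun z => f z = a) ⊆ {x, (x.2, x.1)} := by
        intro y hy
        simp only [Finset.mem_filter, Finset.mem_offDiag] at hy
        obtain ⟨⟨hy1, hy2, _⟩, hya⟩ := hy
        have heq : f y = f x := by rw [hya, hxa]
        simp only [Finset.mem_insert, Finset.mem_singleton]
        rcases hf x with h | h <;> rcases hf y with h' | h' <;>
            rw [h, h', Prod.mk.injEq] at heq <;> obtain ⟨e1, e2⟩ := heq
        · left
          exact Prod.ext (hfst y.1 hy1 x.1 hx1 e1) (hsnd y.2 hy2 x.2 hx2 e2)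
        · right
          exact Prod.ext (hsnd y.1 hy1 x.2 hx2 e2) (hfst y.2 hy2 x.1 hx1 e1)
        · right
          exact Prod.ext (hfst y.1 hy1 x.2 hx2 e1) (hsnd y.2 hy2 x.1 hx1 e2)
        · left
          exact Prod.ext (hsnd y.1 hy1 x.1 hx1 e2) (hfst y.2 hy2 x.2 hx2 e1)
      calc (M.offDiag.filter (fun z => f z = a)).card
          ≤ ({x, (x.2, x.1)} : Finset ((V × V) × (V × V))).card :=
            Finset.card_le_card hsub
        _ ≤ 2 := Finset.card_insert_le _ _ |>.trans (by simp)
    · rw [Finset.not_nonempty_iff_eq_empty] at hne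
      rw [hne]
      simp
  -- total count
  have hunion : (EH ∪ M ∪ C).card = EH.card + M.card + C.card := by
    rw [Finset.card_union_of_disjoint, Finset.card_union_of_disjoint d1]
    rw [Finset.disjoint_union_left]
    exact ⟨d2, d3⟩
  have hsum : EH.card + M.card + C.card ≤ T.card := by
    rw [← hunion]
    apply Finset.card_le_card
    intro p hp
    rcases Finset.mem_union.mp hp with hp | hp
    · rcases Finset.mem_union.mp hp with hp | hp
      · exact hEHT hp
      · exact hMT hp
    · exact hCT hp
  have hTcard : T.card = A.ncard * B.ncard := by
    have : T = A.toFinset ×ˢ B.toFinset := by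
      ext p
      simp [hT, Set.mem_toFinset]
    rw [this, Finset.card_product, Set.ncard_eq_toFinset_card' A,
      Set.ncard_eq_toFinset_card' B]
  have hoff : M.offDiag.card = M.card * M.card - M.card := Finset.offDiag_card M
  have hmm : M.card * (M.card - 1) = M.card * M.card - M.card :=
    Nat.mul_sub_one M.card M.card
  rw [hEHcard, hmm]
  omega
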